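/- Define the terminal cost V_f(x) = (1/ε) γ_D^⊤ I. For any state x in the terminal set X_f (i.e., satisfying C^⊤ Λ S ≤ Γ componentwise, or I = 0) and with zero vaccination input, the terminal cost satisfies the Lyapunov decrease condition V_f(f(x,0)) − V_f(x) ≤ −γ_D^⊤ I = −l(x,0). -/

import Mathlib

open Finset

/-- terminal cost `V_f(x) = (1/ε) γ_D^⊤ I` satisfies the
Lyapunov decrease condition `V_f(f(x,0)) − V_f(x) ≤ −γ_D^⊤ I = −l(x,0)`
on the terminal set. -/
theorem sird_terminal_cost_decrease
    (na : ℕ) (S I I' : Fin na → ℝ)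
    (lam gR gD : Fin na → ℝ) (C : Fin na → Fin na → ℝ) (eps : ℝ)
    (hgD : ∀ k, 0 < gD k) (hlam : ∀ k, 0 ≤ lam k) (hC : ∀ k j, 0 ≤ C k j)
    (hI0 : ∀ k, 0 ≤ I k)
    (heps0 : 0 < eps) (heps1 : ∀ k, eps < gR k + gD k)
    -- x ∈ X_f
    (hXf : (∀ j, ∑ k, C k j * (gD k * lam k) * S k ≤ gD j * (gR j + gD j - eps))
           ∨ (∀ k, I k = 0))
    -- dynamics with zero vaccination input
    (hI : ∀ k, I' k = I k + lam k * S k * ∑ j, C k j * I j - (gR k + gD k) * I k) :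
    (1 / eps) * (∑ k, gD k * I' k) - (1 / eps) * (∑ k, gD k * I k)
      ≤ -(∑ k, gD k * I k) := by
  have key : ∑ k, gD k * I' k ≤ (1 - eps) * ∑ k, gD k * I k := by
    rcases hXf with hXf | hZ
    · have hcross : ∑ k, gD k * (lam k * S k * ∑ j, C k j * I j)
          ≤ ∑ j, gD j * (gR j + gD j - eps) * I j := by
        have h1 : ∑ k, gD k * (lam k * S k * ∑ j, C k j * I j)
            = ∑ j, (∑ k, C k j * (gD k * lam k) * S k) * I j := by
          simp only [Finset.mul_sum, Finset.sum_mul]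
          rw [Finset.sum_comm]
          apply Finset.sum_congr rfl
          intro k _
          apply Finset.sum_congr rfl
          intro j _
          ring
        rw [h1]
        apply Finset.sum_le_sum
        intro j _
        exact mul_le_mul_of_nonneg_right (hXf j) (hI0 j)
      calc ∑ k, gD k * I' k
          = ∑ k, gD k * (lam k * S k * ∑ j, C k j * I j)
            + ∑ k, (gD k * I k - gD k * ((gR k + gD k) * I k)) := by
            rw [← Finset.sum_add_distrib]
            apply Finset.sum_congr rfl
            intro k _
            rw [hI k]; ring
        _ ≤ ∑ j, gD j * (gR j + gD j - eps) * I j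
            + ∑ k, (gD k * I k - gD k * ((gR k + gD k) * I k)) := by
            exact add_le_add_left hcross _
        _ = (1 - eps) * ∑ k, gD k * I k := by
            rw [← Finset.sum_add_distrib, Finset.mul_sum]
            apply Finset.sum_congr rfl
            intro k _
            ring
    · have : ∀ k, I' k = 0 := by
        intro k
        rw [hI k, hZ k]
        have : ∑ j, C k j * I j = 0 := by
          apply Finset.sum_eq_zero; intro j _; rw [hZ j]; ring
        rw [this]; ring
      simp [this, hZ]
  have hT : 0 ≤ ∑ k, gD k * I k :=
    Finset.sum_nonneg fun k _ => mul_nonneg (hgD k).le (hI0 k)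
  rw [div_mul_eq_mul_div, div_mul_eq_mul_div, div_sub_div_same,
    div_le_iff₀ heps0]
  nlinarith [key]
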